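/- Let M, N be closed subsets of ℝⁿ and f : M → N a surjection such that for a fixed ε > 0, d(f(x), f(y)) < ε if and only if d(x, y) < ε. Suppose that for each pair of distinct points x, y ∈ M, there is z ∈ M with d(x, z) > ε and d(y, z) < ε, and similarly for each pair of distinct points u, v ∈ N there is w ∈ N with d(u, w) > ε and d(v, w) < ε. Then f is continuous. -/

import Mathlib

theorem reconstruction_continuous {n : ℕ}
    (M N : Set (EuclideanSpace ℝ (Fin n)))
    (hM : IsClosed M) (hN : IsClosed N)
    (f : EuclideanSpace ℝ (Fin n) → EuclideanSpace ℝ (Fin n))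
    (hmaps : Set.MapsTo f M N) (hsurj : Set.SurjOn f M N)
    (ε : ℝ) (hε : 0 < ε)
    (hiff : ∀ x ∈ M, ∀ y ∈ M, dist (f x) (f y) < ε ↔ dist x y < ε)
    (hsepM : ∀ x ∈ M, ∀ y ∈ M, x ≠ y → ∃ z ∈ M, dist x z > ε ∧ dist y z < ε)
    (hsepN : ∀ u ∈ N, ∀ v ∈ N, u ≠ v → ∃ w ∈ N, dist u w > ε ∧ dist v w < ε) :
    ContinuousOn f M := by
  intro x₀ hx₀
  rw [ContinuousWithinAt, Metric.tendsto_nhdsWithin_nhds]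
  by_contra hcont
  push_neg at hcont
  obtain ⟨δ, hδ, hbad⟩ := hcont
  have hseq : ∀ k : ℕ, ∃ x, x ∈ M ∧ dist x x₀ < min ((1:ℝ)/(k+1)) ε ∧ δ ≤ dist (f x) (f x₀) := by
    intro k
    obtain ⟨x, hxM, hx1, hx2⟩ := hbad (min ((1:ℝ)/(k+1)) ε) (lt_min (by positivity) hε)
    exact ⟨x, hxM, hx1, hx2⟩
  choose u huM hud hufd using hseq
  -- the images lie in a compact set
  have hK : IsCompact (N ∩ Metric.closedBall (f x₀) ε) :=
    (isCompact_closedBall (f x₀) ε).inter_left hN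
  have hmem : ∀ k, f (u k) ∈ N ∩ Metric.closedBall (f x₀) ε := by
    intro k
    refine ⟨hmaps (huM k), Metric.mem_closedBall.2 (le_of_lt ?_)⟩
    exact (hiff (u k) (huM k) x₀ hx₀).2 (lt_of_lt_of_le (hud k) (min_le_right _ _))
  obtain ⟨v, hvK, φ, hφ, hconv⟩ := hK.tendsto_subseq hmem
  have hvN : v ∈ N := hvK.1
  have hvne : v ≠ f x₀ := by
    intro h
    have hd : Filter.Tendsto (fun k => dist (f (u (φ k))) (f x₀)) Filter.atTop
        (nhds (dist v (f x₀))) := hconv.dist tendsto_const_nhds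
    have : δ ≤ dist v (f x₀) :=
      ge_of_tendsto hd (Filter.Eventually.of_forall fun k => hufd (φ k))
    rw [h, dist_self] at this
    linarith
  obtain ⟨w, hwN, hvw, hx₀w⟩ := hsepN v hvN (f x₀) (hmaps hx₀) hvne
  obtain ⟨z, hzM, hfz⟩ := hsurj hwN
  have hx₀z : dist x₀ z < ε := (hiff x₀ hx₀ z hzM).1 (by rw [hfz]; exact hx₀w)
  -- eventually dist (f (u (φ k))) w > ε
  have hdist : Filter.Tendsto (fun k => dist (f (u (φ k))) w) Filter.atTop (nhds (dist v w)) :=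
    hconv.dist tendsto_const_nhds
  have hev1 : ∀ᶠ k in Filter.atTop, ε < dist (f (u (φ k))) w :=
    hdist.eventually (eventually_gt_nhds hvw)
  have hev2 : ∀ᶠ k in Filter.atTop, (1 : ℝ)/(φ k + 1) < ε - dist x₀ z := by
    have h1 : Filter.Tendsto (fun k : ℕ => (1 : ℝ)/(φ k + 1)) Filter.atTop (nhds 0) := by
      have := (tendsto_one_div_add_atTop_nhds_zero_nat : Filter.Tendsto (fun n : ℕ => (1:ℝ) / ((n:ℝ) + 1)) Filter.atTop (nhds 0)).comp hφ.tendsto_atTop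
      simpa [Function.comp_def] using this
    exact h1.eventually (eventually_lt_nhds (by linarith))
  obtain ⟨k, hk1, hk2⟩ := (hev1.and hev2).exists
  -- contradiction
  have h1 : ¬ dist (f (u (φ k))) (f z) < ε := by rw [hfz]; linarith
  have h2 : ¬ dist (u (φ k)) z < ε := fun h =>
    h1 ((hiff (u (φ k)) (huM (φ k)) z hzM).2 h)
  have h3 : dist (u (φ k)) z < ε := by
    calc dist (u (φ k)) z ≤ dist (u (φ k)) x₀ + dist x₀ z := dist_triangle _ _ _
      _ < 1/(φ k + 1) + dist x₀ z := by
          have := lt_of_lt_of_le (hud (φ k)) (min_le_left _ _)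
          push_cast at this ⊢
          linarith
      _ < ε := by linarith
  exact h2 h3
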